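/- Let (A,σ) be a difference ring, let α be a unit of A, and let A[t,t⁻¹] be the P-extension of (A,σ) with σ(t) = α·t. Then const(A[t,t⁻¹],σ) = const(A,σ) (i.e., every f ∈ A[t,t⁻¹] with σ(f) = f lies in A) if and only if there are no g ∈ A with g ≠ 0 and m ∈ ℤ with m ≠ 0 such that σ(g) = α^m·g. -/

import Mathlib

open LaurentPolynomial

private lemma sigma_T {A : Type*} [CommRing A]
    (σ : A ≃+* A) (α : Aˣ)
    (σ' : LaurentPolynomial A ≃+* LaurentPolynomial A)
    (hC : ∀ a : A, σ' (C a) = C (σ a))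
    (hT : σ' (T 1) = C (α : A) * T 1) :
    ∀ m : ℤ, σ' (T m) = C ((α ^ m : Aˣ) : A) * T m := by
  have hTneg : σ' (T (-1)) = C ((α⁻¹ : Aˣ) : A) * T (-1) := by
    have h1 : σ' (T 1) * σ' (T (-1)) = 1 := by
      rw [← map_mul, ← T_add]; norm_num
    have h2 : σ' (T 1) * (C ((α⁻¹ : Aˣ) : A) * T (-1)) = 1 := by
      rw [hT]
      have : (C (α : A) * T 1) * (C ((α⁻¹ : Aˣ) : A) * T (-1))
          = C ((α : A) * ((α⁻¹ : Aˣ) : A)) * (T 1 * T (-1)) := by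
        rw [map_mul]; ring
      rw [this, ← T_add]
      norm_num
    calc σ' (T (-1)) = σ' (T (-1)) * (σ' (T 1) * (C ((α⁻¹ : Aˣ) : A) * T (-1))) := by
          rw [h2, mul_one]
      _ = (C ((α⁻¹ : Aˣ) : A) * T (-1)) * (σ' (T 1) * σ' (T (-1))) := by ring
      _ = C ((α⁻¹ : Aˣ) : A) * T (-1) := by rw [h1, mul_one]
  intro m
  induction m using Int.induction_on with
  | zero => simp
  | succ n ih =>
      rw [show ((n : ℤ) + 1) = (n : ℤ) + 1 from rfl, T_add, map_mul, ih, hT,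
        zpow_add_one]
      push_cast [Units.val_mul]
      rw [map_mul]
      ring
  | pred n ih =>
      rw [show (-(n : ℤ) - 1) = (-(n : ℤ)) + (-1) by ring, T_add, map_mul, ih, hTneg,
        zpow_add, zpow_neg_one, Units.val_mul, map_mul]
      ring

private lemma sigma_coeff {A : Type*} [CommRing A]
    (σ : A ≃+* A) (α : Aˣ)
    (σ' : LaurentPolynomial A ≃+* LaurentPolynomial A)
    (hC : ∀ a : A, σ' (C a) = C (σ a))
    (hT : σ' (T 1) = C (α : A) * T 1) :
    ∀ (f : LaurentPolynomial A) (n : ℤ), (σ' f).coeff n = ((α ^ n : Aˣ) : A) * σ (f.coeff n) := by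
  intro f
  induction f using LaurentPolynomial.induction_on' with
  | add p q hp hq =>
      intro n
      rw [map_add, AddMonoidAlgebra.coeff_add, AddMonoidAlgebra.coeff_add, Finsupp.add_apply, Finsupp.add_apply, hp, hq, map_add, mul_add]
  | C_mul_T k a =>
      intro n
      rw [map_mul, hC, sigma_T σ α σ' hC hT, ← mul_assoc, ← map_mul,
        ← single_eq_C_mul_T, ← single_eq_C_mul_T, AddMonoidAlgebra.coeff_single,
        AddMonoidAlgebra.coeff_single, Finsupp.single_apply,
        Finsupp.single_apply]
      split_ifs with h
      · subst h; ring
      · simp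

theorem stmt1 {A : Type*} [CommRing A] [Algebra ℚ A]
    (σ : A ≃+* A) (α : Aˣ)
    (σ' : LaurentPolynomial A ≃+* LaurentPolynomial A)
    (hC : ∀ a : A, σ' (LaurentPolynomial.C a) = LaurentPolynomial.C (σ a))
    (hT : σ' (LaurentPolynomial.T 1) =
        LaurentPolynomial.C (α : A) * LaurentPolynomial.T 1) :
    (∀ f : LaurentPolynomial A, σ' f = f →
        ∃ c : A, σ c = c ∧ f = LaurentPolynomial.C c) ↔
      ¬ ∃ (g : A) (m : ℤ), g ≠ 0 ∧ m ≠ 0 ∧ σ g = ((α ^ m : Aˣ) : A) * g := by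
  constructor
  · rintro h ⟨g, m, hg, hm, hσg⟩
    set f : LaurentPolynomial A := C g * T (-m) with hf
    have hfix : σ' f = f := by
      rw [hf, map_mul, hC, sigma_T σ α σ' hC hT, hσg]
      have hone : ((α ^ m : Aˣ) : A) * ((α ^ (-m) : Aˣ) : A) = 1 := by
        rw [← Units.val_mul, ← zpow_add, add_neg_cancel, zpow_zero, Units.val_one]
      have key : (((α ^ m : Aˣ) : A) * g) * ((α ^ (-m) : Aˣ) : A) = g := by
        calc (((α ^ m : Aˣ) : A) * g) * ((α ^ (-m) : Aˣ) : A)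
            = g * (((α ^ m : Aˣ) : A) * ((α ^ (-m) : Aˣ) : A)) := by ring
          _ = g := by rw [hone, mul_one]
      calc C (((α ^ m : Aˣ) : A) * g) * (C ((α ^ (-m) : Aˣ) : A) * T (-m))
          = C ((((α ^ m : Aˣ) : A) * g) * ((α ^ (-m) : Aˣ) : A)) * T (-m) := by
            simp only [map_mul]; ring
        _ = C g * T (-m) := by rw [key]
    obtain ⟨c, _, hfc⟩ := h f hfix
    have h1 : f.coeff (-m) = g := by
      rw [hf, ← single_eq_C_mul_T, AddMonoidAlgebra.coeff_single, Finsupp.single_apply, if_pos rfl]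
    have h2 : (C c : LaurentPolynomial A).coeff (-m) = 0 := by
      rw [← single_eq_C, AddMonoidAlgebra.coeff_single, Finsupp.single_apply, if_neg (by omega)]
    rw [hfc, h2] at h1
    exact hg h1.symm
  · intro h f hfix
    have hcoeff : ∀ n : ℤ, n ≠ 0 → f.coeff n = 0 := by
      intro n hn
      by_contra hg
      apply h
      refine ⟨f.coeff n, -n, hg, by omega, ?_⟩
      have := sigma_coeff σ α σ' hC hT f n
      rw [hfix] at this
      -- this : f n = α^n * σ (f n)
      have huniv : σ (f.coeff n) = ((α ^ (-n) : Aˣ) : A) * f.coeff n := by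
        have hinv : ((α ^ (-n) : Aˣ) : A) * ((α ^ n : Aˣ) : A) = 1 := by
          rw [← Units.val_mul, ← zpow_add, neg_add_cancel, zpow_zero, Units.val_one]
        calc σ (f.coeff n) = (((α ^ (-n) : Aˣ) : A) * ((α ^ n : Aˣ) : A)) * σ (f.coeff n) := by
              rw [hinv, one_mul]
          _ = ((α ^ (-n) : Aˣ) : A) * (((α ^ n : Aˣ) : A) * σ (f.coeff n)) := by ring
          _ = ((α ^ (-n) : Aˣ) : A) * f.coeff n := by rw [← this]
      exact huniv
    refine ⟨f.coeff 0, ?_, ?_⟩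
    · have := sigma_coeff σ α σ' hC hT f 0
      rw [hfix] at this
      simpa using this.symm
    · ext n
      rw [← single_eq_C, AddMonoidAlgebra.coeff_single, Finsupp.single_apply]
      split_ifs with hn
      · subst hn; rfl
      · exact hcoeff n (fun h0 => hn h0.symm)
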